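/- arXiv:1502.05500 — 3 statements merged into one kernel-verified Lean document; each statement's English description precedes it below -/
import Mathlib

section
/- For every integer k ≥ 2, the poset P_*^k has precalibre-ℵ₁ and has cardinality ℵ₁. -/
/-- The type of countable ordinals, representing `ω₁`. -/
abbrev O1 : Type 1 := {o : Ordinal // o < Ordinal.omega 1}

/-- A condition of the poset `P_*^k`: a triple `(u, A, h)` where `u` is a finite
subset of `ω₁`, `A` is a set of `(k+1)`-element subsets of `u`, and `h` is a
function from `℘ = {v ⊆ u : no (k+1)-element subset of v belongs to A}` to `ω`
(coded as an `Option ℕ`-valued function whose domain is exactly `℘`) such that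
whenever `h` is constant on `w₀, …, w_{k-1} ∈ ℘`, then `w₀ ∪ … ∪ w_{k-1} ∈ ℘`. -/
structure PStar (k : ℕ) : Type 1 where
  u : Finset O1
  A : Finset (Finset O1)
  h : Finset O1 → Option ℕ
  hA : ∀ a ∈ A, a ⊆ u ∧ a.card = k + 1
  hdom : ∀ v : Finset O1, (h v).isSome ↔
    (v ⊆ u ∧ ∀ a : Finset O1, a.card = k + 1 → a ⊆ v → a ∉ A)
  hlin : ∀ (w : Fin k → Finset O1) (n : ℕ), (∀ i, h (w i) = some n) →
    (h (Finset.univ.biUnion w)).isSome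

/-- The order of `P_*^k`: `p ≤ q` iff `u_q ⊆ u_p`, `A_q = A_p ∩ [u_q]^{k+1}`, and
`h_q ⊆ h_p`. -/
def PStar.le {k : ℕ} (p q : PStar k) : Prop :=
  q.u ⊆ p.u ∧ (∀ a : Finset O1, a ∈ q.A ↔ a ∈ p.A ∧ a ⊆ q.u) ∧
  ∀ v : Finset O1, (q.h v).isSome → p.h v = q.h v

/-- Precalibre-`ℵ₁` for a poset with order relation `le`: every uncountable subset
has an uncountable subset every finite subset of which has a common lower bound. -/
def Precalibre {Q : Type*} (le : Q → Q → Prop) : Prop :=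
  ∀ S : Set Q, ¬S.Countable → ∃ S' : Set Q, S' ⊆ S ∧ ¬S'.Countable ∧
    ∀ t : Finset Q, ↑t ⊆ S' → ∃ q : Q, ∀ p ∈ t, le q p

namespace PStarAux

variable {k : ℕ}

lemma pstar_ext {p q : PStar k} (hu : p.u = q.u) (hA : p.A = q.A) (hh : p.h = q.h) :
    p = q := by
  cases p; cases q; simp_all

/-- canonical enumeration of `p.u`. -/
noncomputable def en (p : PStar k) : Fin p.u.card ≃o {x // x ∈ p.u} := p.u.orderIsoOfFin rfl

noncomputable def upN (p : PStar k) (s : Finset ℕ) : Finset O1 :=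
  (Finset.univ.filter (fun i : Fin p.u.card => (i : ℕ) ∈ s)).image (fun i => (en p i : O1))

noncomputable def posN (p : PStar k) (v : Finset O1) : Finset ℕ :=
  (Finset.univ.filter (fun i : Fin p.u.card => (en p i : O1) ∈ v)).image Fin.val

lemma mem_upN {p : PStar k} {s : Finset ℕ} {x : O1} :
    x ∈ upN p s ↔ ∃ i : Fin p.u.card, (i : ℕ) ∈ s ∧ (en p i : O1) = x := by
  simp [upN]

lemma mem_posN {p : PStar k} {v : Finset O1} {j : ℕ} :
    j ∈ posN p v ↔ ∃ i : Fin p.u.card, (en p i : O1) ∈ v ∧ (i : ℕ) = j := by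
  simp [posN]

lemma upN_subset (p : PStar k) (s : Finset ℕ) : upN p s ⊆ p.u := by
  intro x hx
  rcases mem_upN.1 hx with ⟨i, _, hi⟩
  exact hi ▸ (en p i).2

/-- Agreement of two conditions' enumerations on a set `R`. -/
def AgreeOn (R : Set O1) (p q : PStar k) : Prop :=
  p.u.card = q.u.card ∧
  ∀ (i : Fin p.u.card) (i' : Fin q.u.card), (i : ℕ) = (i' : ℕ) →
    (((en p i : O1) ∈ R ↔ (en q i' : O1) ∈ R) ∧ ((en p i : O1) ∈ R → (en p i : O1) = (en q i' : O1)))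

lemma agreeOn_self_univ (p : PStar k) : AgreeOn Set.univ p p := by
  refine ⟨rfl, fun i i' hii => ?_⟩
  have : i = i' := Fin.ext hii
  subst this
  simp

lemma orderIsoOfFin_congr {u u' : Finset O1} (h : u = u') {i : Fin u.card}
    {i' : Fin u'.card} (hii : (i : ℕ) = (i' : ℕ)) :
    ((u.orderIsoOfFin rfl) i : O1) = ((u'.orderIsoOfFin rfl) i' : O1) := by
  subst h
  have : i = i' := Fin.ext hii
  subst this
  rfl

lemma agreeOn_univ_of_u_eq {p q : PStar k} (hu : p.u = q.u) : AgreeOn Set.univ p q := by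
  have hc : p.u.card = q.u.card := by rw [hu]
  exact ⟨hc, fun i i' hii => ⟨by simp, fun _ => orderIsoOfFin_congr hu hii⟩⟩

lemma mem_upN_posN {R : Set O1} {p q : PStar k} (hag : AgreeOn R p q)
    {v : Finset O1} (hv : v ⊆ p.u) {x : O1} (hx : x ∈ v) (hxR : x ∈ R) :
    x ∈ upN q (posN p v) := by
  obtain ⟨hc, hpt⟩ := hag
  set i : Fin p.u.card := (en p).symm ⟨x, hv hx⟩ with hi
  have hival : (en p i : O1) = x := by simp [hi]
  have hlt : (i : ℕ) < q.u.card := hc ▸ i.2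
  refine mem_upN.2 ⟨⟨(i : ℕ), hlt⟩, ?_, ?_⟩
  · exact mem_posN.2 ⟨i, hival ▸ hx, rfl⟩
  · have := (hpt i ⟨(i : ℕ), hlt⟩ rfl).2 (hival ▸ hxR)
    rw [← this, hival]

lemma upN_posN_eq {R : Set O1} {p q : PStar k} (hag : AgreeOn R p q)
    {v : Finset O1} (hv : v ⊆ p.u) (hvR : ↑v ⊆ R) :
    upN q (posN p v) = v := by
  apply Finset.Subset.antisymm
  · intro x hx
    rcases mem_upN.1 hx with ⟨i', hi's, hi'x⟩
    rcases mem_posN.1 hi's with ⟨i, hiv, hii⟩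
    have := (hag.2 i i' hii).2 (hvR hiv)
    rwa [← hi'x, ← this]
  · intro x hx
    exact mem_upN_posN hag hv hx (hvR hx)

lemma upN_posN_self {p : PStar k} {v : Finset O1} (hv : v ⊆ p.u) :
    upN p (posN p v) = v :=
  upN_posN_eq (agreeOn_self_univ p) hv (by simp)

lemma upN_posN_of_u_eq {p q : PStar k} (hu : p.u = q.u) {v : Finset O1} (hv : v ⊆ p.u) :
    upN q (posN p v) = v :=
  upN_posN_eq (agreeOn_univ_of_u_eq hu) hv (by simp)

end PStarAux

namespace PStarAux

variable {k : ℕ}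

noncomputable def mk1 (r : Finset O1) (p : PStar k) : List (Option {x // x ∈ r}) :=
  List.ofFn (fun i : Fin p.u.card => if h : (en p i : O1) ∈ r then some ⟨_, h⟩ else none)

noncomputable def hgraph (p : PStar k) : Finset (Finset ℕ × ℕ) :=
  p.u.powerset.biUnion (fun v => ((p.h v).map (fun m => (posN p v, m))).toFinset)

noncomputable def inv (r : Finset O1) (p : PStar k) :
    List (Option {x // x ∈ r}) × Finset (Finset ℕ) × Finset (Finset ℕ × ℕ) :=
  (mk1 r p, p.A.image (posN p), hgraph p)

lemma mem_hgraph {p : PStar k} {s : Finset ℕ} {m : ℕ} :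
    (s, m) ∈ hgraph p ↔ ∃ v : Finset O1, v ⊆ p.u ∧ p.h v = some m ∧ posN p v = s := by
  simp only [hgraph, Finset.mem_biUnion, Finset.mem_powerset, Option.mem_toFinset,
    Option.mem_def, Option.map_eq_some_iff]
  constructor
  · rintro ⟨v, hv, mm, hmm, heq⟩
    have heq' : posN p v = s ∧ mm = m := by simpa using heq
    exact ⟨v, hv, heq'.2 ▸ hmm, heq'.1⟩
  · rintro ⟨v, hv, hm, hs⟩
    exact ⟨v, hv, m, hm, by simp [hs]⟩

lemma agreeOn_of_mk1 {r : Finset O1} {p q : PStar k} (hm : mk1 r p = mk1 r q) :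
    AgreeOn (↑r) p q := by
  have hlen : p.u.card = q.u.card := by
    have := congrArg List.length hm
    simpa [mk1] using this
  refine ⟨hlen, fun i i' hii => ?_⟩
  have hip : (i : ℕ) < (mk1 r p).length := by simpa [mk1] using i.2
  have hiq : (i : ℕ) < (mk1 r q).length := by simpa [mk1] using hii ▸ i'.2
  have h1 : (mk1 r p)[(i : ℕ)]'hip = (mk1 r q)[(i : ℕ)]'hiq := by
    simp only [hm]
  simp only [mk1, List.getElem_ofFn] at h1
  have e1 : (⟨(i : ℕ), by simpa [mk1] using hip⟩ : Fin p.u.card) = i := by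
    apply Fin.ext; rfl
  have e2 : (⟨(i : ℕ), by simpa [mk1] using hiq⟩ : Fin q.u.card) = i' := by
    apply Fin.ext; exact hii
  rw [e1, e2] at h1
  by_cases hp : (en p i : O1) ∈ r <;> by_cases hq : (en q i' : O1) ∈ r
  · refine ⟨by simp [hp, hq], fun _ => ?_⟩
    rw [dif_pos hp, dif_pos hq] at h1
    exact congrArg Subtype.val (Option.some.inj h1)
  · rw [dif_pos hp, dif_neg hq] at h1; exact absurd h1 (by simp)
  · rw [dif_neg hp, dif_pos hq] at h1; exact absurd h1 (by simp)
  · exact ⟨by simp [hp, hq], fun hxr => absurd hxr hp⟩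

lemma h_transfer' {r : Finset O1} {p q : PStar k} (hinv : inv r p = inv r q)
    {v : Finset O1} {m : ℕ} (hv : v ⊆ p.u) (hm : p.h v = some m) :
    q.h (upN q (posN p v)) = some m := by
  have h3 : hgraph p = hgraph q := congrArg (fun x => x.2.2) hinv
  have : (posN p v, m) ∈ hgraph q := h3 ▸ mem_hgraph.2 ⟨v, hv, hm, rfl⟩
  rcases mem_hgraph.1 this with ⟨v', hv', hm', hs'⟩
  rw [← hs', upN_posN_self hv']
  exact hm'

lemma A_transfer' {r : Finset O1} {p q : PStar k} (hinv : inv r p = inv r q)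
    {a : Finset O1} (ha : a ∈ p.A) (hup : upN q (posN p a) = a) : a ∈ q.A := by
  have h2 : p.A.image (posN p) = q.A.image (posN q) := congrArg (fun x => x.2.1) hinv
  have hmem : posN p a ∈ q.A.image (posN q) := h2 ▸ Finset.mem_image_of_mem _ ha
  rcases Finset.mem_image.1 hmem with ⟨b, hb, hba⟩
  have : b = a := by
    rw [← upN_posN_self ((q.hA b hb).1), hba, hup]
  exact this ▸ hb

lemma agreeOn_of_inv {r : Finset O1} {p q : PStar k} (hinv : inv r p = inv r q) :
    AgreeOn (↑r) p q :=
  agreeOn_of_mk1 (congrArg Prod.fst hinv)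

lemma A_transfer {r : Finset O1} {p q : PStar k} (hinv : inv r p = inv r q)
    {a : Finset O1} (ha : a ∈ p.A) (har : a ⊆ r) : a ∈ q.A :=
  A_transfer' hinv ha
    (upN_posN_eq (agreeOn_of_inv hinv) ((p.hA a ha).1) (by exact_mod_cast Finset.coe_subset.2 har))

lemma h_coherence {r : Finset O1} {p q : PStar k} (hinv : inv r p = inv r q)
    {v : Finset O1} (hvp : v ⊆ p.u) (hvq : v ⊆ q.u) (hvr : v ⊆ r) :
    p.h v = q.h v := by
  have hupq : upN q (posN p v) = v :=
    upN_posN_eq (agreeOn_of_inv hinv) hvp (by exact_mod_cast Finset.coe_subset.2 hvr)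
  have hupp : upN p (posN q v) = v :=
    upN_posN_eq (agreeOn_of_inv hinv.symm) hvq (by exact_mod_cast Finset.coe_subset.2 hvr)
  apply Option.ext
  intro m
  constructor
  · intro hm
    have := h_transfer' hinv hvp hm
    rwa [hupq] at this
  · intro hm
    have := h_transfer' hinv.symm hvq hm
    rwa [hupp] at this

lemma eq_of_inv_of_u_eq {r : Finset O1} {p q : PStar k} (hinv : inv r p = inv r q)
    (hu : p.u = q.u) : p = q := by
  refine pstar_ext hu ?_ ?_
  · ext a
    constructor
    · intro ha
      exact A_transfer' hinv ha (upN_posN_of_u_eq hu ((p.hA a ha).1))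
    · intro ha
      exact A_transfer' hinv.symm ha (upN_posN_of_u_eq hu.symm ((q.hA a ha).1))
  · funext v
    by_cases hvp : v ⊆ p.u
    · apply Option.ext
      intro m
      constructor
      · intro hm
        have := h_transfer' hinv hvp hm
        rwa [upN_posN_of_u_eq hu hvp] at this
      · intro hm
        have := h_transfer' hinv.symm (hu ▸ hvp) hm
        rwa [upN_posN_of_u_eq hu.symm (hu ▸ hvp)] at this
    · have h1 : ¬(p.h v).isSome := fun hs => hvp ((p.hdom v).1 hs).1
      have h2 : ¬(q.h v).isSome := fun hs => hvp (hu ▸ ((q.hdom v).1 hs).1)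
      rw [Option.not_isSome_iff_eq_none.1 h1, Option.not_isSome_iff_eq_none.1 h2]

end PStarAux

namespace PStarAux

variable {k : ℕ}

open scoped Classical

noncomputable def tU (t : Finset (PStar k)) : Finset O1 := t.sup (·.u)
noncomputable def tA (t : Finset (PStar k)) : Finset (Finset O1) := t.sup (·.A)

def GoodT (t : Finset (PStar k)) (v : Finset O1) : Prop :=
  v ⊆ tU t ∧ ∀ a : Finset O1, a.card = k + 1 → a ⊆ v → a ∉ tA t

noncomputable def NN (t : Finset (PStar k)) : ℕ :=
  1 + t.sup (fun p => p.u.powerset.sup (fun v => (p.h v).getD 0))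

noncomputable def fr (t : Finset (PStar k)) (v : Finset O1) : ℕ :=
  NN t + (tU t).powerset.toList.idxOf v

noncomputable def hT (t : Finset (PStar k)) (v : Finset O1) : Option ℕ :=
  if GoodT t v then
    (if hp : ∃ p ∈ t, v ⊆ p.u then hp.choose.h v else some (fr t v))
  else none

lemma mem_tA {t : Finset (PStar k)} {a : Finset O1} : a ∈ tA t ↔ ∃ p ∈ t, a ∈ p.A :=
  Finset.mem_sup

lemma u_subset_tU {t : Finset (PStar k)} {p : PStar k} (hp : p ∈ t) : p.u ⊆ tU t :=
  Finset.le_sup (f := (·.u)) hp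

lemma val_lt_NN {t : Finset (PStar k)} {p : PStar k} (hp : p ∈ t) {v : Finset O1} {m : ℕ}
    (hm : p.h v = some m) : m < NN t := by
  have hv : v ⊆ p.u := ((p.hdom v).1 (by simp [hm])).1
  have h1 : (p.h v).getD 0 ≤ p.u.powerset.sup (fun v => (p.h v).getD 0) :=
    Finset.le_sup (f := fun v => (p.h v).getD 0) (Finset.mem_powerset.2 hv)
  have h2 : p.u.powerset.sup (fun v => (p.h v).getD 0) ≤
      t.sup (fun p => p.u.powerset.sup (fun v => (p.h v).getD 0)) :=
    Finset.le_sup (f := fun p : PStar k => p.u.powerset.sup (fun v => (p.h v).getD 0)) hp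
  have : m ≤ t.sup (fun p => p.u.powerset.sup (fun v => (p.h v).getD 0)) := by
    rw [hm] at h1; exact le_trans h1 h2
  have hN : NN t = 1 + t.sup (fun p => p.u.powerset.sup (fun v => (p.h v).getD 0)) := rfl
  omega

lemma fr_injOn {t : Finset (PStar k)} {v v' : Finset O1} (hv : v ⊆ tU t) (hv' : v' ⊆ tU t)
    (h : fr t v = fr t v') : v = v' := by
  have h1 : v ∈ (tU t).powerset.toList := by
    rw [Finset.mem_toList, Finset.mem_powerset]; exact hv
  have h2 : v' ∈ (tU t).powerset.toList := by
    rw [Finset.mem_toList, Finset.mem_powerset]; exact hv'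
  have := Nat.add_left_cancel h
  exact (List.idxOf_inj h1).1 this

lemma NN_le_fr (t : Finset (PStar k)) (v : Finset O1) : NN t ≤ fr t v := Nat.le_add_right _ _

section Amalgam

variable {t : Finset (PStar k)} {r : Finset O1}
  (hpair : ∀ p ∈ t, ∀ q ∈ t, p ≠ q → p.u ∩ q.u = r)
  (hinv : ∀ p ∈ t, ∀ q ∈ t, inv r p = inv r q)

include hpair hinv

/-- If `v` lies in two petals, the values agree. -/
lemma petal_coherence {p q : PStar k} (hp : p ∈ t) (hq : q ∈ t)
    {v : Finset O1} (hvp : v ⊆ p.u) (hvq : v ⊆ q.u) : p.h v = q.h v := by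
  by_cases hpq : p = q
  · subst hpq; rfl
  · have hvr : v ⊆ r := (hpair p hp q hq hpq) ▸ Finset.subset_inter hvp hvq
    exact h_coherence (hinv p hp q hq) hvp hvq hvr

lemma hT_eq_of_petal {p : PStar k} (hp : p ∈ t) {v : Finset O1}
    (hgood : GoodT t v) (hvp : v ⊆ p.u) : hT t v = p.h v := by
  rw [hT, if_pos hgood]
  have hex : ∃ p ∈ t, v ⊆ p.u := ⟨p, hp, hvp⟩
  rw [dif_pos hex]
  exact petal_coherence hpair hinv hex.choose_spec.1 hp hex.choose_spec.2 hvp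

/-- A set in `p.A` contained in another petal `q.u` is in `q.A`. -/
lemma A_cross {p q : PStar k} (hp : p ∈ t) (hq : q ∈ t) {a : Finset O1}
    (ha : a ∈ p.A) (haq : a ⊆ q.u) : a ∈ q.A := by
  by_cases hpq : p = q
  · exact hpq ▸ ha
  · have har : a ⊆ r := (hpair p hp q hq hpq) ▸ Finset.subset_inter ((p.hA a ha).1) haq
    exact A_transfer (hinv p hp q hq) ha har

lemma goodT_of_good {p : PStar k} (hp : p ∈ t) {v : Finset O1}
    (hv : v ⊆ p.u) (hgood : ∀ a : Finset O1, a.card = k + 1 → a ⊆ v → a ∉ p.A) :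
    GoodT t v := by
  refine ⟨hv.trans (u_subset_tU hp), fun a hcard hav hmem => ?_⟩
  rcases mem_tA.1 hmem with ⟨q, hq, haq⟩
  exact hgood a hcard hav (A_cross hpair hinv hq hp haq (hav.trans hv))

lemma isSome_hT_of_goodT {v : Finset O1} (hgood : GoodT t v) : (hT t v).isSome := by
  rw [hT, if_pos hgood]
  by_cases hex : ∃ p ∈ t, v ⊆ p.u
  · rw [dif_pos hex]
    obtain ⟨hp, hvp⟩ := hex.choose_spec
    rw [(hex.choose.hdom v)]
    exact ⟨hvp, fun a hcard hav hmem =>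
      hgood.2 a hcard hav (mem_tA.2 ⟨hex.choose, hp, hmem⟩)⟩
  · rw [dif_neg hex]; rfl

lemma amalg (hk : 1 ≤ k) : ∃ z : PStar k, ∀ p ∈ t, PStar.le z p := by
  refine ⟨⟨tU t, tA t, hT t, ?_, ?_, ?_⟩, ?_⟩
  · -- hA
    intro a ha
    rcases mem_tA.1 ha with ⟨p, hp, hap⟩
    exact ⟨((p.hA a hap).1).trans (u_subset_tU hp), (p.hA a hap).2⟩
  · -- hdom
    intro v
    constructor
    · intro hs
      by_contra hgood
      rw [hT, if_neg (show ¬ GoodT t v from hgood)] at hs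
      simp at hs
    · exact isSome_hT_of_goodT hpair hinv
  · -- hlin
    intro w n hw
    have hgoodw : ∀ i, GoodT t (w i) := by
      intro i
      by_contra hgood
      have := hw i
      rw [hT, if_neg hgood] at this
      simp at this
    by_cases hn : n < NN t
    · -- old value: every w i lies in a petal
      have hpet : ∀ i, ∃ p ∈ t, w i ⊆ p.u := by
        intro i
        by_contra hex
        have := hw i
        rw [hT, if_pos (hgoodw i), dif_neg hex] at this
        have := Option.some.inj this
        have := NN_le_fr t (w i)
        omega
      classical
      choose P hPmem hPsub using hpet
      have hPval : ∀ i, (P i).h (w i) = some n := by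
        intro i
        have := hw i
        rwa [hT_eq_of_petal hpair hinv (hPmem i) (hgoodw i) (hPsub i)] at this
      -- show GoodT of the union
      have hgoodW : GoodT t (Finset.univ.biUnion w) := by
        refine ⟨Finset.biUnion_subset.2 (fun i _ => (hgoodw i).1), ?_⟩
        intro a hcard hav hmem
        rcases mem_tA.1 hmem with ⟨q, hq, haq⟩
        have hau : a ⊆ q.u := (q.hA a haq).1
        -- transported sets
        have hval' : ∀ i, q.h (upN q (posN (P i) (w i))) = some n := by
          intro i
          by_cases hPq : P i = q
          · subst hPq
            rw [upN_posN_self (hPsub i)]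
            exact hPval i
          · exact h_transfer' (hinv (P i) (hPmem i) q hq) (hPsub i) (hPval i)
        have hUsome := q.hlin (fun i => upN q (posN (P i) (w i))) n hval'
        have hUgood := (q.hdom _).1 hUsome
        refine hUgood.2 a hcard ?_ haq
        -- a ⊆ ⋃ w' i
        intro x hx
        rcases Finset.mem_biUnion.1 (hav hx) with ⟨i, _, hxi⟩
        have hxq : x ∈ q.u := hau hx
        refine Finset.mem_biUnion.2 ⟨i, Finset.mem_univ i, ?_⟩
        by_cases hPq : P i = q
        · subst hPq
          rw [upN_posN_self (hPsub i)]
          exact hxi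
        · have hxr : x ∈ r := (hpair (P i) (hPmem i) q hq hPq) ▸
            Finset.mem_inter.2 ⟨(hPsub i) hxi, hxq⟩
          exact mem_upN_posN (agreeOn_of_inv (hinv (P i) (hPmem i) q hq))
            (hPsub i) hxi (by exact_mod_cast hxr)
      exact isSome_hT_of_goodT hpair hinv hgoodW
    · -- fresh value: all w i are equal
      have hfr : ∀ i, ¬(∃ p ∈ t, w i ⊆ p.u) ∧ fr t (w i) = n := by
        intro i
        have hwi := hw i
        rw [hT, if_pos (hgoodw i)] at hwi
        by_cases hex : ∃ p ∈ t, w i ⊆ p.u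
        · exfalso
          rw [dif_pos hex] at hwi
          exact hn (val_lt_NN hex.choose_spec.1 hwi)
        · rw [dif_neg hex] at hwi
          exact ⟨hex, Option.some.inj hwi⟩
      have heq : ∀ i, w i = w ⟨0, by omega⟩ := by
        intro i
        exact fr_injOn ((hgoodw i).1) ((hgoodw ⟨0, by omega⟩).1)
          (((hfr i).2).trans ((hfr ⟨0, by omega⟩).2).symm)
      have hWeq : Finset.univ.biUnion w = w ⟨0, by omega⟩ := by
        apply Finset.Subset.antisymm
        · exact Finset.biUnion_subset.2 (fun i _ => (heq i) ▸ Finset.Subset.refl _)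
        · exact Finset.subset_biUnion_of_mem w (Finset.mem_univ (⟨0, by omega⟩ : Fin k))
      rw [hWeq]
      exact isSome_hT_of_goodT hpair hinv (hgoodw _)
  · -- z ≤ p
    intro p hp
    refine ⟨u_subset_tU hp, ?_, ?_⟩
    · intro a
      constructor
      · intro ha
        exact ⟨mem_tA.2 ⟨p, hp, ha⟩, (p.hA a ha).1⟩
      · rintro ⟨ha, hau⟩
        rcases mem_tA.1 ha with ⟨q, hq, haq⟩
        exact A_cross hpair hinv hq hp haq hau
    · intro v hs
      have hgoodp := (p.hdom v).1 hs
      have hgood : GoodT t v := goodT_of_good hpair hinv hp hgoodp.1 hgoodp.2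
      exact hT_eq_of_petal hpair hinv hp hgood hgoodp.1

end Amalgam

end PStarAux

namespace PStarAux

lemma uncountable_image_of_injOn {α β : Type*} {S : Set α} {f : α → β}
    (hS : ¬S.Countable) (hf : Set.InjOn f S) : ¬(f '' S).Countable := by
  intro hc
  apply hS
  have hinj : Function.Injective (fun x : S => (⟨f x, Set.mem_image_of_mem f x.2⟩ : f '' S)) := by
    intro x y hxy
    exact Subtype.ext (hf x.2 y.2 (congrArg Subtype.val hxy))
  rw [← Set.countable_coe_iff] at hc ⊢
  exact hinj.countable

lemma exists_uncountable_fiber {α β : Type*} [Countable β] {S : Set α}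
    (hS : ¬S.Countable) (f : α → β) : ∃ c : β, ¬{p ∈ S | f p = c}.Countable := by
  by_contra hc
  push_neg at hc
  apply hS
  have : S ⊆ ⋃ c : β, {p ∈ S | f p = c} := fun p hp => Set.mem_iUnion.2 ⟨f p, hp, rfl⟩
  exact (Set.countable_iUnion hc).mono this

theorem delta_aux {α : Type*} [DecidableEq α] :
    ∀ n : ℕ, ∀ T : Set (Finset α), (∀ s ∈ T, s.card = n) → ¬T.Countable →
    ∃ r : Finset α, ∃ T' : Set (Finset α), T' ⊆ T ∧ ¬T'.Countable ∧
      ∀ s ∈ T', ∀ s' ∈ T', s ≠ s' → s ∩ s' = r := by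
  intro n
  induction n with
  | zero =>
    intro T hcard hT
    exfalso
    apply hT
    apply (Set.countable_singleton (∅ : Finset α)).mono
    intro s hs
    simp [Finset.card_eq_zero.1 (hcard s hs)]
  | succ n ih =>
    intro T hcard hT
    by_cases hx : ∃ x : α, ¬{s ∈ T | x ∈ s}.Countable
    · obtain ⟨x, hx⟩ := hx
      set T₁ : Set (Finset α) := {s ∈ T | x ∈ s} with hT₁
      have hinj : Set.InjOn (fun s => s.erase x) T₁ := by
        intro s hs s' hs' hss
        have h1 : s = insert x (s.erase x) := (Finset.insert_erase hs.2).symm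
        have h2 : s' = insert x (s'.erase x) := (Finset.insert_erase hs'.2).symm
        dsimp only at hss
        rw [h1, h2, hss]
      have hT₂ : ¬((fun s => s.erase x) '' T₁).Countable :=
        uncountable_image_of_injOn hx hinj
      have hcard₂ : ∀ s ∈ (fun s => s.erase x) '' T₁, s.card = n := by
        rintro s ⟨s', hs', rfl⟩
        rw [Finset.card_erase_of_mem hs'.2, hcard s' hs'.1]
        omega
      obtain ⟨r', T₂', hT₂'sub, hT₂'unc, hT₂'delta⟩ := ih _ hcard₂ hT₂
      set T' : Set (Finset α) := {s ∈ T₁ | s.erase x ∈ T₂'} with hT'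
      have hT'unc : ¬T'.Countable := by
        intro hc
        apply hT₂'unc
        apply ((hc.image (fun s => s.erase x))).mono
        intro b hb
        rcases hT₂'sub hb with ⟨s, hs, rfl⟩
        exact ⟨s, ⟨hs, hb⟩, rfl⟩
      refine ⟨insert x r', T', fun s hs => hs.1.1, hT'unc, ?_⟩
      intro s hs s' hs' hss
      have hne : s.erase x ≠ s'.erase x := fun h => hss (hinj hs.1 hs'.1 h)
      have hinter := hT₂'delta _ hs.2 _ hs'.2 hne
      have hxs : x ∈ s := hs.1.2
      have hxs' : x ∈ s' := hs'.1.2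
      ext a
      simp only [Finset.mem_inter, Finset.mem_insert]
      constructor
      · intro ⟨has, has'⟩
        by_cases hax : a = x
        · exact Or.inl hax
        · right
          rw [← hinter]
          exact Finset.mem_inter.2 ⟨Finset.mem_erase.2 ⟨hax, has⟩, Finset.mem_erase.2 ⟨hax, has'⟩⟩
      · intro h
        rcases h with rfl | h
        · exact ⟨hxs, hxs'⟩
        · rw [← hinter] at h
          have := Finset.mem_inter.1 h
          exact ⟨Finset.mem_of_mem_erase this.1, Finset.mem_of_mem_erase this.2⟩
    · push_neg at hx
      -- all elements are in countably many sets; find an uncountable disjoint family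
      obtain ⟨M, hM⟩ := zorn_subset
        {M : Set (Finset α) | M ⊆ T ∧ M.Pairwise fun s s' => s ∩ s' = ∅}
        (by
          intro c hc hchain
          refine ⟨⋃₀ c, ⟨?_, ?_⟩, fun s hs => Set.subset_sUnion_of_mem hs⟩
          · intro s hs
            rcases Set.mem_sUnion.1 hs with ⟨M, hMc, hsM⟩
            exact (hc hMc).1 hsM
          · intro s hs s' hs' hss
            rcases Set.mem_sUnion.1 hs with ⟨M, hMc, hsM⟩
            rcases Set.mem_sUnion.1 hs' with ⟨M', hM'c, hs'M'⟩
            rcases hchain.total hMc hM'c with h | h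
            · exact (hc hM'c).2 (h hsM) hs'M' hss
            · exact (hc hMc).2 hsM (h hs'M') hss)
      by_cases hMc : M.Countable
      · exfalso
        -- M countable: find a set disjoint from everything in M, contradict maximality
        have hU : (⋃ s ∈ M, (↑s : Set α)).Countable :=
          hMc.biUnion (fun s _ => s.countable_toSet)
        have hbad : {s ∈ T | ∃ x ∈ ⋃ m ∈ M, (↑m : Set α), x ∈ s}.Countable := by
          have : {s ∈ T | ∃ x ∈ ⋃ m ∈ M, (↑m : Set α), x ∈ s} ⊆
              ⋃ x ∈ ⋃ m ∈ M, (↑m : Set α), {s ∈ T | x ∈ s} := by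
            rintro s ⟨hsT, x, hxU, hxs⟩
            exact Set.mem_biUnion hxU ⟨hsT, hxs⟩
          exact (hU.biUnion (fun x _ => hx x)).mono this
        have : ¬(T ⊆ {s ∈ T | ∃ x ∈ ⋃ m ∈ M, (↑m : Set α), x ∈ s}) :=
          fun hsub => hT (hbad.mono hsub)
        rcases Set.not_subset.1 this with ⟨s₀, hs₀T, hs₀⟩
        have hdisj : ∀ m ∈ M, s₀ ∩ m = ∅ := by
          intro m hm
          rw [Finset.eq_empty_iff_forall_notMem]
          intro a ha
          have := Finset.mem_inter.1 ha
          exact hs₀ ⟨hs₀T, a, Set.mem_biUnion hm (this.2), this.1⟩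
        have hs₀M : s₀ ∉ M := by
          intro hmem
          have hne : s₀.Nonempty := by
            rw [← Finset.card_pos, hcard s₀ hs₀T]; omega
          obtain ⟨a, ha⟩ := hne
          exact hs₀ ⟨hs₀T, a, Set.mem_biUnion hmem ha, ha⟩
        have hM' : insert s₀ M ∈
            {M : Set (Finset α) | M ⊆ T ∧ M.Pairwise fun s s' => s ∩ s' = ∅} := by
          constructor
          · exact Set.insert_subset hs₀T hM.1.1
          · apply Set.Pairwise.insert hM.1.2
            intro m hm hne
            exact ⟨hdisj m hm, by rw [Finset.inter_comm]; exact hdisj m hm⟩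
        have := hM.2 hM' (Set.subset_insert s₀ M)
        exact hs₀M (this (Set.mem_insert s₀ M))
      · exact ⟨∅, M, hM.1.1, hMc, fun s hs s' hs' hss => hM.1.2 hs hs' hss⟩

theorem delta_system {α : Type*} [DecidableEq α] {T : Set (Finset α)} (hT : ¬T.Countable) :
    ∃ r : Finset α, ∃ T' : Set (Finset α), T' ⊆ T ∧ ¬T'.Countable ∧
      ∀ s ∈ T', ∀ s' ∈ T', s ≠ s' → s ∩ s' = r := by
  obtain ⟨n, hn⟩ := exists_uncountable_fiber hT (fun s => s.card)
  obtain ⟨r, T', hsub, hunc, hdelta⟩ := delta_aux n {s ∈ T | s.card = n}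
    (fun s hs => hs.2) hn
  exact ⟨r, T', fun s hs => (hsub hs).1, hunc, hdelta⟩

end PStarAux

namespace PStarAux

variable {k : ℕ}

lemma fiber_u_countable (u₀ : Finset O1) : {p : PStar k | p.u = u₀}.Countable := by
  rw [← Set.countable_coe_iff]
  have hF : ∀ p : {p : PStar k | p.u = u₀}, (p : PStar k).A ∈ u₀.powerset.powerset := by
    rintro ⟨p, hp⟩
    rw [Finset.mem_powerset]
    intro a ha
    rw [Finset.mem_powerset]
    exact hp ▸ (p.hA a ha).1
  set F : {p : PStar k | p.u = u₀} →
      ({A // A ∈ u₀.powerset.powerset} × ({v // v ∈ u₀.powerset} → Option ℕ)) :=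
    fun p => (⟨(p : PStar k).A, hF p⟩, fun v => (p : PStar k).h v) with hFdef
  have hinj : Function.Injective F := by
    rintro ⟨p, hp⟩ ⟨q, hq⟩ hpq
    have hA : p.A = q.A := congrArg (fun z => (z.1 : Finset (Finset O1))) hpq
    have hh : ∀ v : {v // v ∈ u₀.powerset}, p.h v = q.h v :=
      fun v => congrFun (congrArg Prod.snd hpq) v
    refine Subtype.ext (pstar_ext (hp.trans hq.symm) hA ?_)
    funext v
    by_cases hv : v ⊆ u₀
    · exact hh ⟨v, Finset.mem_powerset.2 hv⟩
    · have h1 : ¬(p.h v).isSome := fun hs => hv (hp ▸ ((p.hdom v).1 hs).1)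
      have h2 : ¬(q.h v).isSome := fun hs => hv (hq ▸ ((q.hdom v).1 hs).1)
      rw [Option.not_isSome_iff_eq_none.1 h1, Option.not_isSome_iff_eq_none.1 h2]
  exact hinj.countable

theorem pstar_precalibre (hk : 2 ≤ k) : Precalibre (PStar.le (k := k)) := by
  intro S hS
  have himg : ¬((fun p : PStar k => p.u) '' S).Countable := by
    intro hcnt
    apply hS
    have hsub : S ⊆ ⋃ u ∈ ((fun p : PStar k => p.u) '' S), {p : PStar k | p.u = u} :=
      fun p hp => Set.mem_biUnion (Set.mem_image_of_mem _ hp) rfl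
    exact (hcnt.biUnion (fun u _ => fiber_u_countable u)).mono hsub
  obtain ⟨r, T', hT'sub, hT'unc, hdelta⟩ := delta_system himg
  have hS₁ : ¬{p ∈ S | p.u ∈ T'}.Countable := by
    intro hcnt
    apply hT'unc
    apply (hcnt.image (fun p => p.u)).mono
    intro u hu
    rcases hT'sub hu with ⟨p, hpS, rfl⟩
    exact ⟨p, ⟨hpS, hu⟩, rfl⟩
  obtain ⟨c, hc⟩ := exists_uncountable_fiber hS₁ (inv r)
  refine ⟨{p ∈ {p ∈ S | p.u ∈ T'} | inv r p = c}, fun p hp => hp.1.1, hc, ?_⟩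
  intro t ht
  have hinvT : ∀ p ∈ t, ∀ q ∈ t, inv r p = inv r q := by
    intro p hp q hq
    exact ((ht (Finset.mem_coe.2 hp)).2).trans ((ht (Finset.mem_coe.2 hq)).2).symm
  have hpairT : ∀ p ∈ t, ∀ q ∈ t, p ≠ q → p.u ∩ q.u = r := by
    intro p hp q hq hpq
    by_cases huv : p.u = q.u
    · exact absurd (eq_of_inv_of_u_eq (hinvT p hp q hq) huv) hpq
    · exact hdelta _ (ht (Finset.mem_coe.2 hp)).1.2 _ (ht (Finset.mem_coe.2 hq)).1.2 huv
  exact amalg hpairT hinvT (by omega)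

noncomputable instance : Infinite O1 := by
  refine Infinite.of_injective (fun n : ℕ => (⟨n, ?_⟩ : O1)) ?_
  · exact lt_trans (Ordinal.nat_lt_omega0 n) (by exact_mod_cast Ordinal.omega0_lt_omega_one)
  · intro a b h
    simpa using congrArg Subtype.val h

lemma mk_O1 : Cardinal.mk O1 = Cardinal.aleph 1 := by
  have : Cardinal.mk O1 = Cardinal.mk (Set.Iio (Ordinal.omega 1)) := rfl
  rw [this, Ordinal.mk_Iio_ordinal, Ordinal.card_omega]
  simp [Cardinal.lift_aleph]

noncomputable def graphOf (p : PStar k) : Finset (Finset O1 × ℕ) :=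
  p.u.powerset.biUnion (fun v => ((p.h v).map (fun m => (v, m))).toFinset)

lemma mem_graphOf {p : PStar k} {v : Finset O1} {m : ℕ} :
    (v, m) ∈ graphOf p ↔ v ⊆ p.u ∧ p.h v = some m := by
  simp only [graphOf, Finset.mem_biUnion, Finset.mem_powerset, Option.mem_toFinset,
    Option.mem_def, Option.map_eq_some_iff]
  constructor
  · rintro ⟨w, hw, mm, hmm, heq⟩
    have : w = v ∧ mm = m := by simpa [Prod.ext_iff] using heq
    exact ⟨this.1 ▸ hw, this.1 ▸ this.2 ▸ hmm⟩
  · rintro ⟨hv, hm⟩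
    exact ⟨v, hv, m, hm, rfl⟩

lemma graphOf_inj {p q : PStar k} (hu : p.u = q.u) (hA : p.A = q.A)
    (hg : graphOf p = graphOf q) : p = q := by
  refine pstar_ext hu hA ?_
  funext v
  apply Option.ext
  intro m
  constructor
  · intro hm
    have hv : v ⊆ p.u := ((p.hdom v).1 (by simp [hm])).1
    exact (mem_graphOf.1 (hg ▸ mem_graphOf.2 ⟨hv, hm⟩)).2
  · intro hm
    have hv : v ⊆ q.u := ((q.hdom v).1 (by simp [hm])).1
    exact (mem_graphOf.1 (hg.symm ▸ mem_graphOf.2 ⟨hv, hm⟩)).2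

lemma mk_pstar (hk : 2 ≤ k) : Cardinal.mk (PStar k) = Cardinal.aleph 1 := by
  have h1 : Cardinal.mk (Finset O1) = Cardinal.aleph 1 := by
    rw [Cardinal.mk_finset_of_infinite, mk_O1]
  have h2 : Cardinal.mk (Finset (Finset O1)) = Cardinal.aleph 1 := by
    rw [Cardinal.mk_finset_of_infinite, h1]
  have h3 : Cardinal.mk (Finset O1 × ℕ) = Cardinal.aleph 1 := by
    rw [Cardinal.mk_prod]
    simp only [Cardinal.mk_nat, Cardinal.lift_aleph0, Cardinal.lift_uzero, h1]
    rw [Cardinal.mul_eq_max (Cardinal.aleph0_le_aleph 1) le_rfl]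
    exact max_eq_left (Cardinal.aleph0_le_aleph 1)
  have h4 : Cardinal.mk (Finset (Finset O1 × ℕ)) = Cardinal.aleph 1 := by
    rw [Cardinal.mk_finset_of_infinite, h3]
  apply le_antisymm
  · have hinj : Function.Injective
        (fun p : PStar k => ((p.u, p.A, graphOf p) :
          Finset O1 × Finset (Finset O1) × Finset (Finset O1 × ℕ))) := by
      intro p q hpq
      have h := Prod.ext_iff.1 hpq
      have h' := Prod.ext_iff.1 h.2
      exact graphOf_inj h.1 h'.1 h'.2
    have := Cardinal.mk_le_of_injective hinj
    rw [Cardinal.mk_prod, Cardinal.mk_prod] at this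
    simp only [Cardinal.lift_id, h1, h2, h4] at this
    rwa [Cardinal.mul_eq_self (Cardinal.aleph0_le_aleph 1),
      Cardinal.mul_eq_self (Cardinal.aleph0_le_aleph 1)] at this
  · rw [← mk_O1]
    have hdom0 : ∀ (x : O1) (v : Finset O1),
        (if v ⊆ ({x} : Finset O1) then some 0 else none).isSome ↔
          (v ⊆ ({x} : Finset O1) ∧ ∀ a : Finset O1, a.card = k + 1 → a ⊆ v →
            a ∉ (∅ : Finset (Finset O1))) := by
      intro x v
      by_cases hv : v ⊆ ({x} : Finset O1) <;> simp [hv]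
    refine Cardinal.mk_le_of_injective (f := fun x : O1 =>
      (⟨{x}, ∅, fun v => if v ⊆ ({x} : Finset O1) then some 0 else none,
        by simp, hdom0 x, ?_⟩ : PStar k)) ?_
    · intro w n hw
      have hsub : Finset.univ.biUnion w ⊆ ({x} : Finset O1) := by
        apply Finset.biUnion_subset.2
        intro i _
        have := hw i
        by_cases hv : w i ⊆ ({x} : Finset O1)
        · exact hv
        · rw [if_neg hv] at this; exact absurd this (by simp)
      rw [if_pos hsub]
      rfl
    · intro x y hxy
      have : ({x} : Finset O1) = {y} := congrArg PStar.u hxy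
      exact Finset.singleton_inj.1 this

end PStarAux


/-- For every `k ≥ 2`, the poset `P_*^k` has precalibre-`ℵ₁` and has
cardinality `ℵ₁`. -/
theorem pstar_precalibre_and_card (k : ℕ) (hk : 2 ≤ k) :
    Precalibre (PStar.le (k := k)) ∧ Cardinal.mk (PStar k) = Cardinal.aleph 1 :=
  ⟨PStarAux.pstar_precalibre hk, PStarAux.mk_pstar hk⟩
end

section
/- Let k ≥ 2. Suppose that for each ξ < ω₁ we are given a condition q_ξ = (u_{q_ξ}, A_{q_ξ}, h_{q_ξ}) in P_*^k, a finite nonempty set u*_ξ ⊆ u_{q_ξ} such that the sets u*_ξ (ξ < ω₁) are pairwise disjoint, and for each α ∈ u*_ξ a set v*_{ξ,α} ⊆ u_{q_ξ} such that no (k+1)-element subset of v*_{ξ,α} belongs to A_{q_ξ} and v*_{ξ,α} is not contained in α (i.e., v*_{ξ,α} has an element ≥ α). Then there exist ξ₀ < … < ξ_k < ω₁ and a condition q ∈ P_*^k with q ≤ q_{ξ_ℓ} for all ℓ ≤ k, such that for every choice of ordinals α_ℓ ∈ u*_{ξ_ℓ} (ℓ ≤ k), some (k+1)-element subset of ⋃_{ℓ≤k}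 v*_{ξ_ℓ,α_ℓ} belongs to A_q. -/
noncomputable section
open Cardinal

lemma O1_mk : #O1 = Cardinal.lift.{1,0} (ℵ₁) := by
  have h4 : #↥(Set.Iio (Ordinal.omega 1)) = Cardinal.lift.{1,0} (Ordinal.omega 1).card :=
    Ordinal.mk_Iio_ordinal _
  rw [Ordinal.card_omega] at h4
  exact h4

lemma O1_uncountable : ¬(Set.univ : Set O1).Countable := by
  rw [Cardinal.countable_iff_lt_aleph_one, Cardinal.mk_univ, O1_mk]
  simp [Cardinal.lift_aleph]

lemma succ_lt_omega1 (y : O1) : y.val + 1 < Ordinal.omega 1 := by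
  have hl : Order.IsSuccLimit (Ordinal.omega 1) := by
    exact Cardinal.isSuccLimit_omega 1
  rw [Ordinal.add_one_eq_succ]; exact hl.succ_lt y.2

lemma Iic_countable (y : O1) : {x : O1 | x ≤ y}.Countable := by
  rw [Cardinal.countable_iff_lt_aleph_one]
  have hmap : #{x : O1 | x ≤ y} ≤ #↥(Set.Iio (y.val + 1)) := by
    refine Cardinal.mk_le_of_injective (f := fun x => ⟨x.1.val, ?_⟩) ?_
    · exact Set.mem_Iio.mpr (lt_of_le_of_lt (Subtype.coe_le_coe.mpr x.2) (Order.lt_add_one_iff.mpr le_rfl))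
    · intro a b hab
      ext1; ext1
      simpa using congrArg Subtype.val hab
  refine lt_of_le_of_lt hmap ?_
  rw [Ordinal.mk_Iio_ordinal]
  have h1 : (y.val + 1).card < ℵ₁ := by
    rw [← Cardinal.lt_ord, Cardinal.ord_aleph]
    exact succ_lt_omega1 y
  calc Cardinal.lift.{1,0} (y.val+1).card < Cardinal.lift.{1,0} ℵ₁ := Cardinal.lift_lt.mpr h1
    _ = ℵ₁ := by simp [Cardinal.lift_aleph]


lemma pigeon {C : Type*} [Countable C] {S : Set O1} (hS : ¬S.Countable) (f : O1 → C) :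
    ∃ c, ¬{ξ ∈ S | f ξ = c}.Countable := by
  by_contra hall
  push_neg at hall
  apply hS
  have : S ⊆ ⋃ c, {ξ ∈ S | f ξ = c} := fun ξ hξ => Set.mem_iUnion.mpr ⟨f ξ, hξ, rfl⟩
  exact (Set.countable_iUnion hall).mono this

lemma uncount_diff {S B : Set O1} (hS : ¬S.Countable) (hB : B.Countable) :
    ¬(S \ B).Countable := by
  intro h
  exact hS (((h.union hB)).mono (fun x hx => by
    by_cases hxb : x ∈ B
    · exact Set.mem_union_right _ hxb
    · exact Set.mem_union_left _ ⟨hx, hxb⟩))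

lemma uncount_nonempty {S : Set O1} (hS : ¬S.Countable) : S.Nonempty := by
  rcases S.eq_empty_or_nonempty with h | h
  · exact absurd (h ▸ Set.countable_empty) hS
  · exact h

/-- The Δ-system-style selection lemma. -/
lemma select : ∀ (n : ℕ) (f : O1 → Finset O1) (S : Set O1), ¬S.Countable →
    (∀ ξ ∈ S, (f ξ).card ≤ n) →
    ∃ (r : Finset O1) (T : Set O1), T ⊆ S ∧ ¬T.Countable ∧ (∀ ξ ∈ T, r ⊆ f ξ) ∧
      ∀ x : O1, x ∉ r → {ξ ∈ T | x ∈ f ξ}.Countable := by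
  intro n
  induction n with
  | zero =>
    intro f S hS hcard
    refine ⟨∅, S, le_refl _, hS, fun ξ _ => Finset.empty_subset _, fun x _ => ?_⟩
    have : {ξ ∈ S | x ∈ f ξ} = ∅ := by
      ext ξ
      simp only [Set.mem_setOf_eq, Set.mem_empty_iff_false, iff_false, not_and]
      intro hξ hx
      have := hcard ξ hξ
      have := Finset.card_pos.mpr ⟨x, hx⟩
      omega
    rw [this]; exact Set.countable_empty
  | succ n ih =>
    intro f S hS hcard
    by_cases hfreq : ∀ x : O1, {ξ ∈ S | x ∈ f ξ}.Countable
    · exact ⟨∅, S, le_refl _, hS, fun ξ _ => Finset.empty_subset _, fun x _ => hfreq x⟩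
    · push_neg at hfreq
      obtain ⟨x₀, hx₀⟩ := hfreq
      set S' := {ξ ∈ S | x₀ ∈ f ξ} with hS'
      obtain ⟨r', T, hTS, hT, hr, hfib⟩ := ih (fun ξ => f ξ \ {x₀}) S' hx₀
        (by
          intro ξ hξ
          show (f ξ \ {x₀}).card ≤ n
          have h1 : (f ξ \ {x₀}).card < (f ξ).card := by
            apply Finset.card_lt_card
            constructor
            · exact Finset.sdiff_subset
            · intro hsub
              have := hsub hξ.2
              simp at this
          have := hcard ξ hξ.1
          omega)
      refine ⟨insert x₀ r', T, fun ξ hξ => (hTS hξ).1, hT, ?_, ?_⟩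
      · intro ξ hξ
        refine Finset.insert_subset (hTS hξ).2 ((hr ξ hξ).trans Finset.sdiff_subset)
      · intro x hx
        simp only [Finset.mem_insert, not_or] at hx
        have : {ξ ∈ T | x ∈ f ξ} = {ξ ∈ T | x ∈ f ξ \ {x₀}} := by
          ext ξ
          simp only [Set.mem_setOf_eq, Finset.mem_sdiff, Finset.mem_singleton]
          exact and_congr_right (fun _ => ⟨fun h => ⟨h, hx.1⟩, fun h => h.1⟩)
        rw [this]
        exact hfib x hx.2

lemma pick (u : O1 → Finset O1) (r : Finset O1) (T : Set O1) (hT : ¬T.Countable)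
    (hfib : ∀ x : O1, x ∉ r → {ξ ∈ T | x ∈ u ξ}.Countable) (m : ℕ) :
    ∃ g : Fin m → O1, StrictMono g ∧ (∀ i, g i ∈ T) ∧
      ∀ i j, i ≠ j → ∀ x, x ∈ u (g i) → x ∈ u (g j) → x ∈ r := by
  induction m with
  | zero => exact ⟨fun i => i.elim0, fun a => a.elim0, fun i => i.elim0, fun i => i.elim0⟩
  | succ m ih =>
    obtain ⟨g, hmono, hgT, hgint⟩ := ih
    set W : Finset O1 := Finset.univ.biUnion (fun i => u (g i)) with hW
    set B : Set O1 := (⋃ i : Fin m, {η : O1 | η ≤ g i}) ∪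
      (⋃ x ∈ ((W \ r : Finset O1) : Set O1), {ξ ∈ T | x ∈ u ξ}) with hB
    have hBc : B.Countable := by
      apply Set.Countable.union
      · exact Set.countable_iUnion (fun i => Iic_countable (g i))
      · exact Set.Countable.biUnion (W \ r).countable_toSet
          (fun x hx => hfib x (Finset.mem_sdiff.mp (by simpa using hx)).2)
    obtain ⟨η, hη⟩ := uncount_nonempty (uncount_diff hT hBc)
    have hηT : η ∈ T := hη.1
    have hηB : η ∉ B := hη.2
    have hgtη : ∀ i : Fin m, g i < η := by
      intro i
      by_contra hcon
      exact hηB (Set.mem_union_left _ (Set.mem_iUnion.mpr ⟨i, le_of_not_gt hcon⟩))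
    have hηW : ∀ x : O1, x ∈ u η → x ∈ W → x ∈ r := by
      intro x hxu hxW
      by_contra hxr
      exact hηB (Set.mem_union_right _ (Set.mem_iUnion.mpr ⟨x,
        Set.mem_iUnion.mpr ⟨by simp [Finset.mem_sdiff, hxW, hxr], ⟨hηT, hxu⟩⟩⟩))
    refine ⟨Fin.snoc g η, ?_, ?_, ?_⟩
    · intro a b hab
      rcases eq_or_ne b (Fin.last m) with hb | hb
      · subst hb
        obtain ⟨a', ha'⟩ := Fin.exists_castSucc_eq.mpr (Fin.ne_last_of_lt hab)
        rw [← ha', Fin.snoc_castSucc, Fin.snoc_last]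
        exact hgtη a'
      · obtain ⟨b', hb'⟩ := Fin.exists_castSucc_eq.mpr hb
        obtain ⟨a', ha'⟩ := Fin.exists_castSucc_eq.mpr (Fin.ne_last_of_lt (hab.trans_le (le_of_lt (Fin.lt_last_iff_ne_last.mpr hb))))
        rw [← ha', ← hb', Fin.snoc_castSucc, Fin.snoc_castSucc]
        apply hmono
        rw [← ha', ← hb'] at hab
        exact (Fin.castSucc_lt_castSucc_iff).mp hab
    · intro i
      rcases eq_or_ne i (Fin.last m) with hi | hi
      · subst hi; rw [Fin.snoc_last]; exact hηT
      · obtain ⟨i', hi'⟩ := Fin.exists_castSucc_eq.mpr hi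
        rw [← hi', Fin.snoc_castSucc]; exact hgT i'
    · intro i j hij x hxi hxj
      rcases eq_or_ne i (Fin.last m) with hi | hi <;> rcases eq_or_ne j (Fin.last m) with hj | hj
      · exact absurd (hi.trans hj.symm) hij
      · subst hi
        obtain ⟨j', hj'⟩ := Fin.exists_castSucc_eq.mpr hj
        rw [Fin.snoc_last] at hxi
        rw [← hj', Fin.snoc_castSucc] at hxj
        exact hηW x hxi (Finset.mem_biUnion.mpr ⟨j', Finset.mem_univ _, hxj⟩)
      · subst hj
        obtain ⟨i', hi'⟩ := Fin.exists_castSucc_eq.mpr hi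
        rw [Fin.snoc_last] at hxj
        rw [← hi', Fin.snoc_castSucc] at hxi
        exact hηW x hxj (Finset.mem_biUnion.mpr ⟨i', Finset.mem_univ _, hxi⟩)
      · obtain ⟨i', hi'⟩ := Fin.exists_castSucc_eq.mpr hi
        obtain ⟨j', hj'⟩ := Fin.exists_castSucc_eq.mpr hj
        rw [← hi', Fin.snoc_castSucc] at hxi
        rw [← hj', Fin.snoc_castSucc] at hxj
        refine hgint i' j' (fun h => hij ?_) x hxi hxj
        rw [← hi', ← hj', h]



def sortedL (u : Finset O1) : List O1 := u.sort (· ≤ ·)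
def idx (u : Finset O1) (x : O1) : ℕ := (sortedL u).idxOf x
def codeV (u : Finset O1) (v : Finset O1) : Finset ℕ := v.image (idx u)
def mapTo (u w : Finset O1) (x : O1) : O1 := (sortedL w).getD (idx u x) x

lemma length_sortedL (u : Finset O1) : (sortedL u).length = u.card := Finset.length_sort _
lemma mem_sortedL {u : Finset O1} {x : O1} : x ∈ sortedL u ↔ x ∈ u := Finset.mem_sort _

lemma idx_lt {u : Finset O1} {x : O1} (hx : x ∈ u) : idx u x < u.card := by
  rw [← length_sortedL]; exact List.idxOf_lt_length_iff.mpr (mem_sortedL.mpr hx)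

lemma get_idx {u : Finset O1} {x : O1} (_hx : x ∈ u) (h : idx u x < (sortedL u).length) :
    (sortedL u).get ⟨idx u x, h⟩ = x := List.idxOf_get h

lemma idx_get {u : Finset O1} (i : Fin (sortedL u).length) :
    idx u ((sortedL u).get i) = i := by
  have hmem : (sortedL u).get i ∈ sortedL u := by
    rw [List.get_eq_getElem]; exact List.getElem_mem _
  have hlt : idx u ((sortedL u).get i) < (sortedL u).length :=
    List.idxOf_lt_length_iff.mpr hmem
  have heq := List.idxOf_get hlt
  have hnd : (sortedL u).Nodup := Finset.sort_nodup _ _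
  have := List.Nodup.get_inj_iff hnd |>.mp (heq : (sortedL u).get ⟨_, hlt⟩ = (sortedL u).get i)
  exact congrArg Fin.val this

lemma idx_injOn {u : Finset O1} {x y : O1} (hx : x ∈ u) (hy : y ∈ u)
    (h : idx u x = idx u y) : x = y :=
  (List.idxOf_inj (mem_sortedL.mpr hx)).mp h

lemma idx_strictMono {u : Finset O1} {x y : O1} (hx : x ∈ u) (hy : y ∈ u) (hxy : x < y) :
    idx u x < idx u y := by
  by_contra hcon
  push_neg at hcon
  have h1 : idx u y < (sortedL u).length := by rw [length_sortedL]; exact idx_lt hy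
  have h2 : idx u x < (sortedL u).length := by rw [length_sortedL]; exact idx_lt hx
  have hs : (sortedL u).Pairwise (· ≤ ·) := Finset.pairwise_sort _ _
  have := hs.rel_get_of_le (show (⟨idx u y, h1⟩ : Fin _) ≤ ⟨idx u x, h2⟩ from hcon)
  rw [get_idx hx h2, get_idx hy h1] at this
  exact absurd this (not_le.mpr hxy)

lemma mapTo_mem {u w : Finset O1} (hcard : u.card = w.card) {x : O1} (hx : x ∈ u) :
    mapTo u w x ∈ w := by
  have h : idx u x < (sortedL w).length := by
    rw [length_sortedL, ← hcard]; exact idx_lt hx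
  rw [mapTo, List.getD_eq_getElem _ _ h]
  exact mem_sortedL.mp (List.getElem_mem h)

lemma idx_mapTo {u w : Finset O1} (hcard : u.card = w.card) {x : O1} (hx : x ∈ u) :
    idx w (mapTo u w x) = idx u x := by
  have h : idx u x < (sortedL w).length := by
    rw [length_sortedL, ← hcard]; exact idx_lt hx
  rw [mapTo, List.getD_eq_getElem _ _ h]
  have := idx_get (u := w) ⟨idx u x, h⟩
  rwa [List.get_eq_getElem] at this

lemma mapTo_mapTo {u w : Finset O1} (hcard : u.card = w.card) {x : O1} (hx : x ∈ u) :
    mapTo w u (mapTo u w x) = x := by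
  have h1 : idx w (mapTo u w x) = idx u x := idx_mapTo hcard hx
  have h2 : idx u x < (sortedL u).length := by rw [length_sortedL]; exact idx_lt hx
  rw [mapTo, h1, List.getD_eq_getElem _ _ h2]
  have := get_idx hx h2
  rwa [List.get_eq_getElem] at this

lemma mapTo_injOn {u w : Finset O1} (hcard : u.card = w.card) {x y : O1} (hx : x ∈ u)
    (hy : y ∈ u) (h : mapTo u w x = mapTo u w y) : x = y := by
  have := congrArg (idx w) h
  rw [idx_mapTo hcard hx, idx_mapTo hcard hy] at this
  exact idx_injOn hx hy this

lemma codeV_image {u w : Finset O1} (hcard : u.card = w.card) {v : Finset O1} (hv : v ⊆ u) :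
    codeV w (v.image (mapTo u w)) = codeV u v := by
  rw [codeV, codeV, Finset.image_image]
  apply Finset.image_congr
  intro x hx
  exact idx_mapTo hcard (hv hx)

lemma card_image_mapTo {u w : Finset O1} (hcard : u.card = w.card) {v : Finset O1}
    (hv : v ⊆ u) : (v.image (mapTo u w)).card = v.card :=
  Finset.card_image_of_injOn (fun x hx y hy => mapTo_injOn hcard (hv hx) (hv hy))

lemma codeV_injOn {u v₁ v₂ : Finset O1} (h1 : v₁ ⊆ u) (h2 : v₂ ⊆ u)
    (h : codeV u v₁ = codeV u v₂) : v₁ = v₂ := by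
  ext x
  constructor
  · intro hx
    have : idx u x ∈ codeV u v₂ := h ▸ Finset.mem_image_of_mem _ hx
    obtain ⟨y, hy, hyx⟩ := Finset.mem_image.mp this
    rwa [← idx_injOn (h2 hy) (h1 hx) hyx]
  · intro hx
    have : idx u x ∈ codeV u v₁ := h ▸ Finset.mem_image_of_mem _ hx
    obtain ⟨y, hy, hyx⟩ := Finset.mem_image.mp this
    rwa [← idx_injOn (h1 hy) (h2 hx) hyx]

lemma toFinset_map_list {α β : Type*} [DecidableEq α] [DecidableEq β] (f : α → β)
    (l : List α) : (l.map f).toFinset = l.toFinset.image f := by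
  ext x; simp

lemma idx_eq_on_root {u w r : Finset O1} (hru : r ⊆ u) (hrw : r ⊆ w)
    (hcode : codeV u r = codeV w r) : ∀ y ∈ r, idx u y = idx w y := by
  have hsorted : ∀ (s : Finset O1), (∀ y ∈ r, y ∈ s) →
      ((sortedL r).map (idx s)).Pairwise (· ≤ ·) := by
    intro s hs
    rw [List.pairwise_map]
    refine List.Pairwise.imp_of_mem ?_ (Finset.sortedLT_sort r).pairwise
    intro a b ha hb hab
    exact le_of_lt (idx_strictMono (hs a (mem_sortedL.mp ha)) (hs b (mem_sortedL.mp hb)) hab)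
  have hnodup : ∀ (s : Finset O1), (∀ y ∈ r, y ∈ s) → ((sortedL r).map (idx s)).Nodup := by
    intro s hs
    refine List.Nodup.map_on ?_ (Finset.sort_nodup _ _)
    intro x hx y hy hxy
    exact idx_injOn (hs x (mem_sortedL.mp hx)) (hs y (mem_sortedL.mp hy)) hxy
  have htofin : ∀ (s : Finset O1), ((sortedL r).map (idx s)).toFinset = codeV s r := by
    intro s
    rw [toFinset_map_list, codeV]
    congr 1
    exact Finset.sort_toFinset _ _
  have hperm : ((sortedL r).map (idx u)).Perm ((sortedL r).map (idx w)) := by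
    apply List.perm_of_nodup_nodup_toFinset_eq (hnodup u hru) (hnodup w hrw)
    rw [htofin, htofin, hcode]
  have heq : (sortedL r).map (idx u) = (sortedL r).map (idx w) :=
    List.Perm.eq_of_pairwise' (hsorted u hru) (hsorted w hrw) hperm
  intro y hy
  exact List.map_eq_map_iff.mp heq y (mem_sortedL.mpr hy)

lemma mapTo_fix {u w r : Finset O1} (hcard : u.card = w.card)
    (hru : r ⊆ u) (hrw : r ⊆ w) (hcode : codeV u r = codeV w r) {x : O1} (hx : x ∈ r) :
    mapTo u w x = x := by
  have key := idx_eq_on_root hru hrw hcode x hx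
  have h' : idx w x < (sortedL w).length := by rw [length_sortedL]; exact idx_lt (hrw hx)
  rw [mapTo, key, List.getD_eq_getElem _ _ h']
  have := get_idx (hrw hx) h'
  rwa [List.get_eq_getElem] at this

lemma transfer_h {k : ℕ} (p₁ p₂ : PStar k) (hcard : p₁.u.card = p₂.u.card)
    (hhc : p₁.u.powerset.image (fun v => (codeV p₁.u v, p₁.h v)) =
      p₂.u.powerset.image (fun v => (codeV p₂.u v, p₂.h v)))
    {v : Finset O1} (hv : v ⊆ p₁.u) :
    p₂.h (v.image (mapTo p₁.u p₂.u)) = p₁.h v := by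
  classical
  have hmem : (codeV p₁.u v, p₁.h v) ∈
      p₂.u.powerset.image (fun v => (codeV p₂.u v, p₂.h v)) := by
    rw [← hhc]
    exact Finset.mem_image_of_mem _ (Finset.mem_powerset.mpr hv)
  obtain ⟨w, hw, hweq⟩ := Finset.mem_image.mp hmem
  have h1 : codeV p₂.u w = codeV p₁.u v := congrArg Prod.fst hweq
  have h2 : p₂.h w = p₁.h v := congrArg Prod.snd hweq
  have hwsub : w ⊆ p₂.u := Finset.mem_powerset.mp hw
  have himg : v.image (mapTo p₁.u p₂.u) ⊆ p₂.u := fun x hx => by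
    obtain ⟨y, hy, hyx⟩ := Finset.mem_image.mp hx
    exact hyx ▸ mapTo_mem hcard (hv hy)
  have : w = v.image (mapTo p₁.u p₂.u) :=
    codeV_injOn hwsub himg (h1.trans (codeV_image hcard hv).symm)
  rw [← this]; exact h2

lemma transfer_A {k : ℕ} (p₁ p₂ : PStar k) (hcard : p₁.u.card = p₂.u.card)
    (hAc : p₁.A.image (codeV p₁.u) = p₂.A.image (codeV p₂.u))
    {a : Finset O1} (ha : a ∈ p₁.A) : a.image (mapTo p₁.u p₂.u) ∈ p₂.A := by
  classical
  have hasub : a ⊆ p₁.u := (p₁.hA a ha).1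
  have hmem : codeV p₁.u a ∈ p₂.A.image (codeV p₂.u) := by
    rw [← hAc]; exact Finset.mem_image_of_mem _ ha
  obtain ⟨b, hb, hbeq⟩ := Finset.mem_image.mp hmem
  have hbsub : b ⊆ p₂.u := (p₂.hA b hb).1
  have himg : a.image (mapTo p₁.u p₂.u) ⊆ p₂.u := fun x hx => by
    obtain ⟨y, hy, hyx⟩ := Finset.mem_image.mp hx
    exact hyx ▸ mapTo_mem hcard (hasub hy)
  have : b = a.image (mapTo p₁.u p₂.u) :=
    codeV_injOn hbsub himg (hbeq.trans (codeV_image hcard hasub).symm)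
  rw [← this]; exact hb


/-- Lemma 2.4(5) of Bagaria–Shelah (in ground-model terms): given conditions
`q ξ ∈ P_*^k` for `ξ < ω₁`, pairwise disjoint finite nonempty sets
`u* ξ ⊆ u_{q ξ}`, and for each `α ∈ u* ξ` a set `v* ξ α ⊆ u_{q ξ}` none of whose
`(k+1)`-element subsets belongs to `A_{q ξ}` and which is not contained in `α`,
there are `ξ₀ < … < ξ_k` and a condition `qq` extending each `q (ξ ℓ)` such that
for every choice `α ℓ ∈ u* (ξ ℓ)`, some `(k+1)`-element subset of
`⋃_{ℓ ≤ k} v* (ξ ℓ) (α ℓ)` belongs to `A_qq`. -/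
theorem pstar_kill_linked (k : ℕ) (hk : 2 ≤ k)
    (q : O1 → PStar k) (ustar : O1 → Finset O1) (vstar : O1 → O1 → Finset O1)
    (husub : ∀ ξ : O1, ustar ξ ⊆ (q ξ).u)
    (hune : ∀ ξ : O1, (ustar ξ).Nonempty)
    (hudisj : ∀ ξ₁ ξ₂ : O1, ξ₁ ≠ ξ₂ → ∀ α ∈ ustar ξ₁, α ∉ ustar ξ₂)
    (hvsub : ∀ ξ : O1, ∀ α ∈ ustar ξ, vstar ξ α ⊆ (q ξ).u)
    (hvA : ∀ ξ : O1, ∀ α ∈ ustar ξ, ∀ a : Finset O1,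
      a.card = k + 1 → a ⊆ vstar ξ α → a ∉ (q ξ).A)
    (hvnot : ∀ ξ : O1, ∀ α ∈ ustar ξ, ∃ β ∈ vstar ξ α, α ≤ β) :
    ∃ ξ : Fin (k + 1) → O1, StrictMono ξ ∧
      ∃ qq : PStar k, (∀ l, PStar.le qq (q (ξ l))) ∧
        ∀ αs : Fin (k + 1) → O1, (∀ l, αs l ∈ ustar (ξ l)) →
          ∃ w : Finset O1, w.card = k + 1 ∧
            w ⊆ Finset.univ.biUnion (fun l => vstar (ξ l) (αs l)) ∧ w ∈ qq.A := by
  classical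
  -- Step 1: pigeonhole on the isomorphism type of the conditions
  set codeF : O1 → ℕ × Finset (Finset ℕ) × Finset (Finset ℕ × Option ℕ) :=
    fun ξ => ((q ξ).u.card, (q ξ).A.image (codeV (q ξ).u),
      (q ξ).u.powerset.image (fun v => (codeV (q ξ).u v, (q ξ).h v))) with hcodeF
  obtain ⟨c, hS0⟩ := pigeon O1_uncountable codeF
  set S0 : Set O1 := {ξ ∈ Set.univ | codeF ξ = c} with hS0def
  -- Step 2: Δ-system style selection
  obtain ⟨r, T, hTS0, hT, hrsub, hfib⟩ := select c.1 (fun ξ => (q ξ).u) S0 hS0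
    (fun ξ hξ => le_of_eq (congrArg Prod.fst hξ.2))
  -- Step 3: pigeonhole on the position code of the root
  obtain ⟨c2, hT1⟩ := pigeon hT (fun ξ => codeV (q ξ).u r)
  set T1 : Set O1 := {ξ ∈ T | codeV (q ξ).u r = c2} with hT1def
  -- Step 4: remove ξ whose ustar meets the downward closure of the root
  have hBadc : {ξ : O1 | ∃ α ∈ ustar ξ, ∃ y ∈ r, α ≤ y}.Countable := by
    have hsub : {ξ : O1 | ∃ α ∈ ustar ξ, ∃ y ∈ r, α ≤ y} ⊆
        ⋃ y ∈ (r : Set O1), {ξ : O1 | ∃ α ∈ ustar ξ, α ≤ y} := by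
      intro ξ hξ
      obtain ⟨α, hα, y, hy, hαy⟩ := hξ
      exact Set.mem_iUnion.mpr ⟨y, Set.mem_iUnion.mpr ⟨hy, ⟨α, hα, hαy⟩⟩⟩
    refine (Set.Countable.biUnion r.countable_toSet (fun y _ => ?_)).mono hsub
    -- each slice injects into the countable initial segment below y
    rw [← Set.countable_coe_iff]
    haveI : Countable ↥{x : O1 | x ≤ y} := Set.countable_coe_iff.mpr (Iic_countable y)
    set wfn : O1 → O1 := fun ξ => if h : ∃ α ∈ ustar ξ, α ≤ y then h.choose else y with hwfn
    have hw1 : ∀ ξ : O1, ξ ∈ {ξ : O1 | ∃ α ∈ ustar ξ, α ≤ y} →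
        wfn ξ ∈ ustar ξ ∧ wfn ξ ≤ y := by
      intro ξ h
      have h' : ∃ α ∈ ustar ξ, α ≤ y := h
      rw [hwfn]
      simp only [dif_pos h']
      obtain ⟨h1, h2⟩ := h'.choose_spec
      exact ⟨h1, h2⟩
    refine Function.Injective.countable
      (f := fun ξp : ↥{ξ : O1 | ∃ α ∈ ustar ξ, α ≤ y} =>
        (⟨wfn ξp.1, (hw1 ξp.1 ξp.2).2⟩ : ↥{x : O1 | x ≤ y})) ?_
    intro ξ₁ ξ₂ h12
    have hα1 := (hw1 ξ₁.1 ξ₁.2).1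
    have hα2 := (hw1 ξ₂.1 ξ₂.2).1
    have heq : wfn ξ₁.1 = wfn ξ₂.1 := congrArg Subtype.val h12
    ext1
    by_contra hne
    exact hudisj ξ₁.1 ξ₂.1 hne _ hα1 (heq ▸ hα2)
  set T2 : Set O1 := T1 \ {ξ : O1 | ∃ α ∈ ustar ξ, ∃ y ∈ r, α ≤ y} with hT2def
  have hT2 : ¬T2.Countable := uncount_diff hT1 hBadc
  -- Step 5: greedy selection of k+1 indices
  have hfib2 : ∀ x : O1, x ∉ r → {ξ ∈ T2 | x ∈ (q ξ).u}.Countable := by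
    intro x hx
    refine (hfib x hx).mono ?_
    intro ξ hξ
    exact ⟨hξ.1.1.1, hξ.2⟩
  obtain ⟨g, hgmono, hgT2, hgint⟩ := pick (fun ξ => (q ξ).u) r T2 hT2 hfib2 (k+1)
  set P : Fin (k+1) → PStar k := fun l => q (g l) with hPdef
  have hgT1 : ∀ l, g l ∈ T1 := fun l => (hgT2 l).1
  have hgT : ∀ l, g l ∈ T := fun l => (hgT1 l).1
  have hgS0 : ∀ l, g l ∈ S0 := fun l => hTS0 (hgT l)
  have hcode : ∀ l, codeF (g l) = c := fun l => (hgS0 l).2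
  have hcard' : ∀ l m, (P l).u.card = (P m).u.card := fun l m => by
    have := (hcode l).trans (hcode m).symm
    exact congrArg Prod.fst this
  have hAc' : ∀ l m, (P l).A.image (codeV (P l).u) = (P m).A.image (codeV (P m).u) :=
    fun l m => by
      have := (hcode l).trans (hcode m).symm
      exact congrArg (fun z => z.2.1) this
  have hhc' : ∀ l m, (P l).u.powerset.image (fun v => (codeV (P l).u v, (P l).h v)) =
      (P m).u.powerset.image (fun v => (codeV (P m).u v, (P m).h v)) :=
    fun l m => by
      have := (hcode l).trans (hcode m).symm
      exact congrArg (fun z => z.2.2) this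
  have hrc : ∀ l m, codeV (P l).u r = codeV (P m).u r := fun l m =>
    ((hgT1 l).2).trans ((hgT1 m).2).symm
  have hrsub' : ∀ l, r ⊆ (P l).u := fun l => hrsub (g l) (hgT l)
  have hint : ∀ l m, l ≠ m → ∀ x, x ∈ (P l).u → x ∈ (P m).u → x ∈ r := by
    intro l m hlm x hxl hxm
    exact hgint l m hlm x hxl hxm
  have hnotbad : ∀ l, ∀ α ∈ ustar (g l), ¬∃ y ∈ r, α ≤ y := by
    intro l α hα hcon
    exact (hgT2 l).2 ⟨α, hα, hcon⟩
  -- the transfer maps fix the root pointwise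
  have hfix : ∀ l m, ∀ x ∈ r, mapTo (P l).u (P m).u x = x := fun l m x hx =>
    mapTo_fix (hcard' l m) (hrsub' l) (hrsub' m) (hrc l m) hx
  have himfix : ∀ l m, ∀ v : Finset O1, v ⊆ r → v.image (mapTo (P l).u (P m).u) = v := by
    intro l m v hv
    rw [Finset.image_congr (g := id) (fun x hx => hfix l m x (hv hx)), Finset.image_id]
  have S2h : ∀ l m, ∀ v : Finset O1, v ⊆ r → (P l).h v = (P m).h v := by
    intro l m v hv
    have := transfer_h (P l) (P m) (hcard' l m) (hhc' l m) (hv.trans (hrsub' l))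
    rw [himfix l m v hv] at this
    exact this.symm
  have S2A : ∀ l m, ∀ a : Finset O1, a ⊆ r → a ∈ (P l).A → a ∈ (P m).A := by
    intro l m a ha hmem
    have := transfer_A (P l) (P m) (hcard' l m) (hAc' l m) hmem
    rwa [himfix l m a ha] at this
  -- the amalgamated condition
  set U : Finset O1 := Finset.univ.biUnion (fun l => (P l).u) with hUdef
  have hUsub : ∀ l, (P l).u ⊆ U := fun l => by
    rw [hUdef]; exact Finset.subset_biUnion_of_mem (u := fun l => (P l).u) (Finset.mem_univ l)
  set AT : Finset (Finset O1) := U.powerset.filter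
    (fun a => a.card = k+1 ∧ ∀ l, ∃ x ∈ a, x ∈ (P l).u ∧ x ∉ r) with hATdef
  set AA : Finset (Finset O1) := Finset.univ.biUnion (fun l => (P l).A) ∪ AT with hAAdef
  set good : Finset O1 → Prop := fun v => v ⊆ U ∧
    ∀ a : Finset O1, a.card = k+1 → a ⊆ v → a ∉ AA with hgooddef
  -- basic properties of AA
  have hAT_not_sub : ∀ a ∈ AT, ∀ l, ¬(a ⊆ (P l).u) := by
    intro a ha l hsub
    obtain ⟨-, -, hmeets⟩ := Finset.mem_filter.mp ha
    have hne : ∃ m : Fin (k+1), m ≠ l := by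
      rcases eq_or_ne l 0 with h0 | h0
      · exact ⟨1, by simp [h0]; omega⟩
      · exact ⟨0, fun h => h0 h.symm⟩
    obtain ⟨m, hm⟩ := hne
    obtain ⟨x, hxa, hxm, hxr⟩ := hmeets m
    exact hxr (hint m l hm x hxm (hsub hxa))
  have hAA_cases : ∀ a ∈ AA, (∃ l, a ∈ (P l).A) ∨ a ∈ AT := by
    intro a ha
    rcases Finset.mem_union.mp ha with h | h
    · obtain ⟨l, -, hl⟩ := Finset.mem_biUnion.mp h
      exact Or.inl ⟨l, hl⟩
    · exact Or.inr h
  have hAA_card : ∀ a ∈ AA, a ⊆ U ∧ a.card = k+1 := by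
    intro a ha
    rcases hAA_cases a ha with ⟨l, hl⟩ | h
    · exact ⟨((P l).hA a hl).1.trans (hUsub l), ((P l).hA a hl).2⟩
    · obtain ⟨hp, hc, -⟩ := Finset.mem_filter.mp h
      exact ⟨Finset.mem_powerset.mp hp, hc⟩
  -- restriction of AA to each u_l is exactly A_l
  have hArestr : ∀ l, ∀ a : Finset O1, a ∈ (P l).A ↔ a ∈ AA ∧ a ⊆ (P l).u := by
    intro l a
    constructor
    · intro ha
      exact ⟨Finset.mem_union_left _ (Finset.mem_biUnion.mpr ⟨l, Finset.mem_univ _, ha⟩),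
        ((P l).hA a ha).1⟩
    · rintro ⟨ha, hsub⟩
      rcases hAA_cases a ha with ⟨m, hm⟩ | h
      · rcases eq_or_ne m l with hml | hml
        · exact hml ▸ hm
        · have har : a ⊆ r := fun x hx => hint m l hml x (((P m).hA a hm).1 hx) (hsub hx)
          exact S2A m l a har hm
      · exact absurd hsub (hAT_not_sub a h l)
  -- ℘_l ⊆ ℘_qq
  have S1 : ∀ l, ∀ v : Finset O1, ((P l).h v).isSome → good v := by
    intro l v hv
    obtain ⟨hvsub', hvA'⟩ := ((P l).hdom v).mp hv
    refine ⟨hvsub'.trans (hUsub l), ?_⟩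
    intro a hac hav ha
    rcases hAA_cases a ha with ⟨m, hm⟩ | h
    · rcases eq_or_ne m l with hml | hml
      · exact hvA' a hac hav (hml ▸ hm)
      · have har : a ⊆ r := fun x hx =>
          hint m l hml x (((P m).hA a hm).1 hx) (hvsub' (hav hx))
        exact hvA' a hac hav (S2A m l a har hm)
    · exact hAT_not_sub a h l ((hav.trans hvsub'))
  -- fresh values
  set N : ℕ := (Finset.univ.sup (fun l : Fin (k+1) =>
    (P l).u.powerset.sup (fun v => ((P l).h v).getD 0))) + 1 with hNdef
  have S4 : ∀ l (v : Finset O1) (n : ℕ), (P l).h v = some n → n < N := by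
    intro l v n hv
    have hvsub' : v ⊆ (P l).u := (((P l).hdom v).mp (by rw [hv]; rfl)).1
    have h1 : ((P l).h v).getD 0 ≤ (P l).u.powerset.sup (fun v => ((P l).h v).getD 0) :=
      Finset.le_sup (f := fun v => ((P l).h v).getD 0) (Finset.mem_powerset.mpr hvsub')
    have h2 : (P l).u.powerset.sup (fun v => ((P l).h v).getD 0) ≤
        Finset.univ.sup (fun l : Fin (k+1) =>
          (P l).u.powerset.sup (fun v => ((P l).h v).getD 0)) :=
      Finset.le_sup (f := fun l : Fin (k+1) =>
        (P l).u.powerset.sup (fun v => ((P l).h v).getD 0)) (Finset.mem_univ l)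
    rw [hv] at h1
    simp only [Option.getD_some] at h1
    omega
  set enc : Finset O1 → ℕ := fun v => U.powerset.toList.idxOf v with hencdef
  have henc_inj : ∀ v₁ v₂ : Finset O1, v₁ ⊆ U → v₂ ⊆ U → enc v₁ = enc v₂ → v₁ = v₂ := by
    intro v₁ v₂ h1 h2 he
    exact (List.idxOf_inj (Finset.mem_toList.mpr (Finset.mem_powerset.mpr h1))).mp he
  set hh : Finset O1 → Option ℕ := fun v =>
    if hv : good v then
      (if hex : ∃ l, ((P l).h v).isSome then (P (Classical.choose hex)).h v
       else some (N + enc v))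
    else none with hhhdef
  have hh_good : ∀ v : Finset O1, (hh v).isSome ↔ good v := by
    intro v
    by_cases hv : good v
    · simp only [hhhdef, dif_pos hv]
      by_cases hex : ∃ l, ((P l).h v).isSome
      · simp only [dif_pos hex]
        exact ⟨fun _ => hv, fun _ => Classical.choose_spec hex⟩
      · simp only [dif_neg hex]
        exact ⟨fun _ => hv, fun _ => rfl⟩
    · simp only [hhhdef, dif_neg hv]
      constructor
      · intro h
        simp at h
      · intro h
        exact absurd h hv
  -- hh extends each h_l
  have S3 : ∀ l, ∀ v : Finset O1, ((P l).h v).isSome → hh v = (P l).h v := by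
    intro l v hv
    have hgood := S1 l v hv
    have hex : ∃ m, ((P m).h v).isSome := ⟨l, hv⟩
    simp only [hhhdef, dif_pos hgood, dif_pos hex]
    set m := Classical.choose hex with hmdef
    have hm : ((P m).h v).isSome := Classical.choose_spec hex
    rcases eq_or_ne m l with hml | hml
    · rw [hml]
    · have hvl : v ⊆ (P l).u := (((P l).hdom v).mp hv).1
      have hvm : v ⊆ (P m).u := (((P m).hdom v).mp hm).1
      have hvr : v ⊆ r := fun x hx => hint m l hml x (hvm hx) (hvl hx)
      exact S2h m l v hvr
  -- value analysis
  have hh_val : ∀ (v : Finset O1) (n : ℕ), hh v = some n →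
      (n < N ∧ ∃ l, (P l).h v = some n) ∨ (n = N + enc v ∧ ∀ l, ¬((P l).h v).isSome) := by
    intro v n hv
    have hgood : good v := (hh_good v).mp (by rw [hv]; rfl)
    by_cases hex : ∃ l, ((P l).h v).isSome
    · left
      have := S3 (Classical.choose hex) v (Classical.choose_spec hex)
      rw [hv] at this
      exact ⟨S4 _ v n this.symm, Classical.choose hex, this.symm⟩
    · right
      simp only [hhhdef, dif_pos hgood, dif_neg hex] at hv
      push_neg at hex
      exact ⟨(Option.some_injective _ hv.symm : n = N + enc v), hex⟩
  -- construct the amalgamated condition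
  refine ⟨g, hgmono, ⟨U, AA, hh, hAA_card, fun v => (hh_good v), ?_⟩, ?_, ?_⟩
  · -- linkedness
    intro w n hw
    rw [hh_good]
    have hkpos : 0 < k := by omega
    haveI : NeZero k := ⟨by omega⟩
    have hwgood : ∀ i, good (w i) := fun i => (hh_good (w i)).mp (by rw [hw i]; rfl)
    by_cases hn : n < N
    · -- all the w i live in the original conditions
      have hold : ∀ i : Fin k, ∃ l, (P l).h (w i) = some n := by
        intro i
        rcases hh_val (w i) n (hw i) with ⟨-, hl⟩ | ⟨hn', -⟩
        · exact hl
        · omega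
      set L : Fin k → Fin (k+1) := fun i => Classical.choose (hold i) with hLdef
      have hL : ∀ i, (P (L i)).h (w i) = some n := fun i => Classical.choose_spec (hold i)
      have hwsubL : ∀ i, w i ⊆ (P (L i)).u := fun i =>
        (((P (L i)).hdom (w i)).mp (by rw [hL i]; rfl)).1
      constructor
      · intro x hx
        obtain ⟨i, -, hxi⟩ := Finset.mem_biUnion.mp hx
        exact (hwgood i).1 hxi
      · intro a hac hasub ha
        rcases hAA_cases a ha with ⟨m, hm⟩ | hat
        · -- transfer all w i into the m-th condition
          set w'' : Fin k → Finset O1 :=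
            fun i => (w i).image (mapTo (P (L i)).u (P m).u) with hw''def
          have hw''h : ∀ i, (P m).h (w'' i) = some n := by
            intro i
            rw [hw''def]
            rw [transfer_h (P (L i)) (P m) (hcard' (L i) m) (hhc' (L i) m) (hwsubL i)]
            exact hL i
          have hbig := ((P m).hdom _).mp ((P m).hlin w'' n hw''h)
          refine hbig.2 a hac ?_ hm
          -- a ⊆ ⋃ w''
          intro x hx
          have hxa := hasub hx
          obtain ⟨i, -, hxi⟩ := Finset.mem_biUnion.mp hxa
          have hxm : x ∈ (P m).u := ((P m).hA a hm).1 hx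
          refine Finset.mem_biUnion.mpr ⟨i, Finset.mem_univ _, ?_⟩
          rw [hw''def]
          rcases eq_or_ne (L i) m with hLm | hLm
          · refine Finset.mem_image.mpr ⟨x, hxi, ?_⟩
            rw [hLm]
            exact mapTo_fix rfl (le_refl _) (le_refl _) rfl (hLm ▸ hwsubL i <| hxi)
          · have hxr : x ∈ r := hint (L i) m hLm x (hwsubL i hxi) hxm
            refine Finset.mem_image.mpr ⟨x, hxi, hfix (L i) m x hxr⟩
        · -- a transversal cannot be covered by k sets
          obtain ⟨-, -, hmeets⟩ := Finset.mem_filter.mp hat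
          have hF : ∀ m : Fin (k+1), ∃ i : Fin k, L i = m := by
            intro m
            obtain ⟨x, hxa, hxm, hxr⟩ := hmeets m
            obtain ⟨i, -, hxi⟩ := Finset.mem_biUnion.mp (hasub hxa)
            refine ⟨i, ?_⟩
            by_contra hne
            exact hxr (hint (L i) m hne x (hwsubL i hxi) hxm)
          set F : Fin (k+1) → Fin k := fun m => Classical.choose (hF m) with hFdef
          have hFinj : Function.Injective F := by
            intro m₁ m₂ hm12
            have h1 : L (F m₁) = m₁ := Classical.choose_spec (hF m₁)
            have h2 : L (F m₂) = m₂ := Classical.choose_spec (hF m₂)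
            rw [← h1, ← h2, hm12]
          have := Fintype.card_le_of_injective F hFinj
          simp at this
    · -- all the w i are new and hence equal
      have hconst : ∀ i : Fin k, w i = w 0 := by
        intro i
        have hi := hh_val (w i) n (hw i)
        have h0 := hh_val (w 0) n (hw 0)
        rcases hi with ⟨hlt, -⟩ | ⟨hi', -⟩
        · omega
        rcases h0 with ⟨hlt, -⟩ | ⟨h0', -⟩
        · omega
        exact henc_inj _ _ (hwgood i).1 (hwgood 0).1 (by omega)
      have : Finset.univ.biUnion w = w 0 := by
        apply Finset.Subset.antisymm
        · intro x hx
          obtain ⟨i, -, hxi⟩ := Finset.mem_biUnion.mp hx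
          exact (hconst i) ▸ hxi
        · intro x hx
          exact Finset.mem_biUnion.mpr ⟨0, Finset.mem_univ _, hx⟩
      rw [this]
      exact hwgood 0
  · -- the amalgamated condition extends each P l
    intro l
    exact ⟨hUsub l, fun a => by rw [hArestr l a], fun v hv => S3 l v hv⟩
  · -- the transversals
    intro αs hαs
    have hβex : ∀ l, ∃ β ∈ vstar (g l) (αs l), αs l ≤ β := fun l =>
      hvnot (g l) (αs l) (hαs l)
    set β : Fin (k+1) → O1 := fun l => Classical.choose (hβex l) with hβdef
    have hβv : ∀ l, β l ∈ vstar (g l) (αs l) := fun l => (Classical.choose_spec (hβex l)).1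
    have hβge : ∀ l, αs l ≤ β l := fun l => (Classical.choose_spec (hβex l)).2
    have hβu : ∀ l, β l ∈ (P l).u := fun l => hvsub (g l) (αs l) (hαs l) (hβv l)
    have hβr : ∀ l, β l ∉ r := by
      intro l hcon
      exact hnotbad l (αs l) (hαs l) ⟨β l, hcon, hβge l⟩
    have hβinj : Function.Injective β := by
      intro l m hlm
      by_contra hne
      exact hβr l (hint l m hne (β l) (hβu l) (hlm.symm ▸ hβu m))
    refine ⟨Finset.univ.image β, ?_, ?_, ?_⟩
    · rw [Finset.card_image_of_injective _ hβinj, Finset.card_univ, Fintype.card_fin]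
    · intro x hx
      obtain ⟨l, -, hl⟩ := Finset.mem_image.mp hx
      exact Finset.mem_biUnion.mpr ⟨l, Finset.mem_univ _, hl ▸ hβv l⟩
    · refine Finset.mem_union_right _ (Finset.mem_filter.mpr ⟨?_, ?_, ?_⟩)
      · refine Finset.mem_powerset.mpr (fun x hx => ?_)
        obtain ⟨l, -, hl⟩ := Finset.mem_image.mp hx
        exact hUsub l (hl ▸ hβu l)
      · rw [Finset.card_image_of_injective _ hβinj, Finset.card_univ, Fintype.card_fin]
      · intro l
        exact ⟨β l, Finset.mem_image_of_mem _ (Finset.mem_univ l), hβu l, hβr l⟩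
end
end

section
/- Let (T, <_T) be a partially ordered set containing an uncountable chain, and let b be any function from the set of 2-element <_T-comparable subsets of T to {0,1}. Then the product poset P₀ × P₁ (with coordinatewise order) is not ccc: the pairs ((({η}, c_η)), (({η}, c_η))) for η ranging over the uncountable chain, where c_η is the function on {η} with value 0, form an uncountable antichain in P₀ × P₁. -/
/-- Two elements are comparable when one is strictly below the other. -/
def Comparable {X : Type*} (lt : X → X → Prop) (η ν : X) : Prop := lt η ν ∨ lt ν η

/-- The conditions of the poset `P_ℓ`: pairs `(w, c)` with `w` a finite subset
of `X` and `c : w → ω` such that `c η ≠ c ν` for every comparable pair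
`{η, ν} ⊆ w` with `b {η, ν} = ℓ`. -/
def PCond {X : Type*} (lt : X → X → Prop) (b : Set X → Fin 2) (ℓ : Fin 2) :=
  {p : Σ w : Finset X, {x : X // x ∈ w} → ℕ //
    ∀ (η ν : X) (hη : η ∈ p.1) (hν : ν ∈ p.1), η ≠ ν → Comparable lt η ν →
      b {η, ν} = ℓ → p.2 ⟨η, hη⟩ ≠ p.2 ⟨ν, hν⟩}

/-- The order of `P_ℓ`: `(w', c') ≤ (w, c)` iff `w ⊆ w'` and `c'` extends `c`. -/
def PCond.le {X : Type*} {lt : X → X → Prop} {b : Set X → Fin 2} {ℓ : Fin 2}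
    (p q : PCond lt b ℓ) : Prop :=
  ∃ hsub : q.1.1 ⊆ p.1.1, ∀ (x : X) (hx : x ∈ q.1.1),
    p.1.2 ⟨x, hsub hx⟩ = q.1.2 ⟨x, hx⟩

/-- The condition `({η}, c_η)` where `c_η` is the function on `{η}` with
constant value `0`. -/
def singletonCond {X : Type*} (lt : X → X → Prop) (b : Set X → Fin 2) (ℓ : Fin 2)
    (η : X) : PCond lt b ℓ :=
  ⟨⟨{η}, fun _ => 0⟩, fun η' ν hη' hν hne _ _ => absurd
    ((Finset.mem_singleton.1 hη').trans (Finset.mem_singleton.1 hν).symm) hne⟩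

/-- If `(T, <_T)` is a partially ordered set containing an uncountable chain `C`,
and `b` is any `{0,1}`-colouring of the comparable pairs, then the pairs
`(({η}, c_η), ({η}, c_η))` for `η ∈ C` form an uncountable antichain of the
product poset `P₀ × P₁` (where compatibility in the product is coordinatewise);
in particular `P₀ × P₁` is not ccc. -/
theorem product_not_ccc {X : Type*} [PartialOrder X]
    (C : Set X) (hC : ¬C.Countable)
    (hchain : ∀ x ∈ C, ∀ y ∈ C, x ≠ y → x < y ∨ y < x)
    (b : Set X → Fin 2) :
    ¬(∀ A : Set (PCond (· < ·) b 0 × PCond (· < ·) b 1),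
        (∀ p ∈ A, ∀ q ∈ A, p ≠ q →
          ¬((∃ r, PCond.le r p.1 ∧ PCond.le r q.1) ∧
            (∃ r, PCond.le r p.2 ∧ PCond.le r q.2))) → A.Countable) ∧
    ¬((fun η : X => (singletonCond (· < ·) b 0 η, singletonCond (· < ·) b 1 η))
        '' C).Countable ∧
    ∀ p ∈ (fun η : X => (singletonCond (· < ·) b 0 η,
            singletonCond (· < ·) b 1 η)) '' C,
      ∀ q ∈ (fun η : X => (singletonCond (· < ·) b 0 η,
            singletonCond (· < ·) b 1 η)) '' C,
        p ≠ q →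
          ¬((∃ r, PCond.le r p.1 ∧ PCond.le r q.1) ∧
            (∃ r, PCond.le r p.2 ∧ PCond.le r q.2)) := by

  -- injectivity of the map
  have finj : Function.Injective
      (fun η : X => (singletonCond (· < ·) b 0 η, singletonCond (· < ·) b 1 η)) := by
    intro η ν h
    have := congrArg (fun p => p.1.1.1) h
    simpa [singletonCond] using this
  -- incompatibility in coordinate ℓ = b {η, ν}
  have key : ∀ (ℓ : Fin 2) (η ν : X), η ∈ C → ν ∈ C → η ≠ ν → b {η, ν} = ℓ →
      ¬ ∃ r : PCond (· < ·) b ℓ, PCond.le r (singletonCond (· < ·) b ℓ η) ∧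
        PCond.le r (singletonCond (· < ·) b ℓ ν) := by
    rintro ℓ η ν hη hν hne hb ⟨r, ⟨hs1, he1⟩, ⟨hs2, he2⟩⟩
    have hηm : η ∈ r.1.1 := hs1 (Finset.mem_singleton_self η)
    have hνm : ν ∈ r.1.1 := hs2 (Finset.mem_singleton_self ν)
    have h1 := he1 η (Finset.mem_singleton_self η)
    have h2 := he2 ν (Finset.mem_singleton_self ν)
    have := r.2 η ν hηm hνm hne (hchain η hη ν hν hne) hb
    simp only [singletonCond] at h1 h2
    exact this (h1.trans h2.symm)
  have hAC : ∀ p ∈ (fun η : X => (singletonCond (· < ·) b 0 η,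
            singletonCond (· < ·) b 1 η)) '' C,
      ∀ q ∈ (fun η : X => (singletonCond (· < ·) b 0 η,
            singletonCond (· < ·) b 1 η)) '' C,
        p ≠ q →
          ¬((∃ r, PCond.le r p.1 ∧ PCond.le r q.1) ∧
            (∃ r, PCond.le r p.2 ∧ PCond.le r q.2)) := by
    rintro p ⟨η, hη, rfl⟩ q ⟨ν, hν, rfl⟩ hpq ⟨h0, h1⟩
    have hne : η ≠ ν := fun h => hpq (by rw [h])
    have hor : b {η, ν} = 0 ∨ b {η, ν} = 1 := by omega
    rcases hor with h | h
    · exact key 0 η ν hη hν hne h h0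
    · exact key 1 η ν hη hν hne h h1
  have hImg : ¬((fun η : X => (singletonCond (· < ·) b 0 η,
      singletonCond (· < ·) b 1 η)) '' C).Countable := by
    intro h
    exact hC (((h.preimage finj).mono (Set.subset_preimage_image _ C)))
  exact ⟨fun hccc => hImg (hccc _ hAC), hImg, hAC⟩
end
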